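/- Counting self-orthogonal subspaces through a vector: Let F = ℤ/dℤ with d prime, and let A be the set of all self-orthogonal subspaces L ⊆ F^{2n} (L ⊆ L^⊥ with respect to the standard symplectic form) with dim L = n - m, where 0 ≤ m < n. For x ∈ F^{2n}, let A(x) = {L ∈ A : x ∈ L^⊥}. Then A is nonempty, and for every nonzero x ∈ F^{2n}, |A(x)|/|A| = (d^{n+m} - 1)/(d^{2n} - 1). -/

import Mathlib

open scoped BigOperators

/-- The standard symplectic bilinear form on `F^{2n}` (viewed as `(F²)^n`),
`⟨x, y⟩ = ∑ i, (u_i v_i' - v_i u_i')`. -/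
noncomputable def sympForm (d n : ℕ) :
    LinearMap.BilinForm (ZMod d) (Fin n → ZMod d × ZMod d) :=
  LinearMap.mk₂ (ZMod d)
    (fun x y => ∑ i, ((x i).1 * (y i).2 - (x i).2 * (y i).1))
    (by
      intro m₁ m₂ y
      rw [← Finset.sum_add_distrib]
      refine Finset.sum_congr rfl fun i _ => ?_
      simp only [Pi.add_apply, Prod.fst_add, Prod.snd_add]
      ring)
    (by
      intro c m y
      simp only [smul_eq_mul]
      rw [Finset.mul_sum]
      refine Finset.sum_congr rfl fun i _ => ?_
      simp only [Pi.smul_apply, Prod.smul_fst, Prod.smul_snd, smul_eq_mul]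
      ring)
    (by
      intro x m₁ m₂
      rw [← Finset.sum_add_distrib]
      refine Finset.sum_congr rfl fun i _ => ?_
      simp only [Pi.add_apply, Prod.fst_add, Prod.snd_add]
      ring)
    (by
      intro c x m
      simp only [smul_eq_mul]
      rw [Finset.mul_sum]
      refine Finset.sum_congr rfl fun i _ => ?_
      simp only [Pi.smul_apply, Prod.smul_fst, Prod.smul_snd, smul_eq_mul]
      ring)

/-- A self-orthogonal subspace of `F^{2n}` of dimension `n - m`. -/
def IsGoodSubspace (d n m : ℕ) (L : Submodule (ZMod d) (Fin n → ZMod d × ZMod d)) : Prop :=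
  L ≤ (sympForm d n).orthogonal L ∧ Module.finrank (ZMod d) L = n - m

section Aux

variable (d n : ℕ)

local notation "V" => Fin n → ZMod d × ZMod d

lemma sympForm_apply (x y : V) :
    sympForm d n x y = ∑ i, ((x i).1 * (y i).2 - (x i).2 * (y i).1) := rfl

lemma sympForm_isAlt : (sympForm d n).IsAlt := by
  intro x
  rw [sympForm_apply]
  exact Finset.sum_eq_zero fun i _ => by ring

lemma sympForm_isRefl : (sympForm d n).IsRefl := (sympForm_isAlt d n).isRefl

lemma sympForm_comm (x y : V) : sympForm d n y x = -(sympForm d n x y) :=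
  ((sympForm_isAlt d n).neg_eq x y).symm

variable [Fact (Nat.Prime d)]

lemma sympForm_exists_ne (x : V) (hx : x ≠ 0) : ∃ y, sympForm d n x y ≠ 0 := by
  obtain ⟨i, hi⟩ : ∃ i, x i ≠ 0 := by
    by_contra h; push_neg at h; exact hx (funext h)
  by_cases h1 : (x i).1 ≠ 0
  · refine ⟨Pi.single i (0, 1), ?_⟩
    rw [sympForm_apply, Finset.sum_eq_single i]
    · simpa using h1
    · intro k _ hk; rw [Pi.single_eq_of_ne hk]; simp
    · simp
  · push_neg at h1
    have h2 : (x i).2 ≠ 0 := by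
      intro h2; exact hi (Prod.ext h1 h2)
    refine ⟨Pi.single i (1, 0), ?_⟩
    rw [sympForm_apply, Finset.sum_eq_single i]
    · simpa using h2
    · intro k _ hk; rw [Pi.single_eq_of_ne hk]; simp
    · simp

lemma sympForm_nondeg : (sympForm d n).Nondegenerate := by
  refine (sympForm_isRefl d n).nondegenerate_iff_separatingLeft.mpr ?_
  intro x hx
  by_contra h
  obtain ⟨y, hy⟩ := sympForm_exists_ne d n x h
  exact hy (hx y)

lemma finrank_total : Module.finrank (ZMod d) (Fin n → ZMod d × ZMod d) = 2 * n := by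
  rw [Module.finrank_pi_fintype]
  simp [Module.finrank_prod, Module.finrank_self, Finset.sum_const, two_mul]
  ring



lemma exists_transvection (v : V) (c : ZMod d) :
    ∃ g : V ≃ₗ[ZMod d] V, (∀ a b, sympForm d n (g a) (g b) = sympForm d n a b) ∧
      ∀ w, g w = w + (c * sympForm d n w v) • v := by
  have hvv : sympForm d n v v = 0 := sympForm_isAlt d n v
  set f : V →ₗ[ZMod d] V := ((sympForm d n).flip v).smulRight v with hf
  have hfw : ∀ w, f w = (sympForm d n w v) • v := fun w => rfl
  set T : ZMod d → (V →ₗ[ZMod d] V) := fun c' => LinearMap.id + c' • f with hT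
  have hTw : ∀ c' w, T c' w = w + (c' * sympForm d n w v) • v := by
    intro c' w
    simp [hT, hfw, smul_smul]
  have key : ∀ c₁ c₂ w, T c₁ (T c₂ w) = w + ((c₁ + c₂) * sympForm d n w v) • v := by
    intro c₁ c₂ w
    rw [hTw, hTw]
    have : sympForm d n (w + (c₂ * sympForm d n w v) • v) v = sympForm d n w v := by
      rw [map_add, map_smul, LinearMap.add_apply, LinearMap.smul_apply, hvv]
      simp
    rw [this, add_assoc, ← add_smul]
    ring_nf
  refine ⟨LinearEquiv.ofLinear (T c) (T (-c)) ?_ ?_, ?_, ?_⟩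
  · refine LinearMap.ext fun w => ?_
    simp [LinearMap.comp_apply, key]
  · refine LinearMap.ext fun w => ?_
    simp [LinearMap.comp_apply, key]
  · intro a b
    show sympForm d n (T c a) (T c b) = sympForm d n a b
    rw [hTw, hTw]
    simp only [map_add, map_smul, LinearMap.add_apply, LinearMap.smul_apply, smul_eq_mul]
    rw [hvv, sympForm_comm d n b v]
    ring
  · intro w
    show T c w = _
    rw [hTw]

lemma exists_isometry_step (x y : V) (hxy : sympForm d n x y ≠ 0) :
    ∃ g : V ≃ₗ[ZMod d] V,
      (∀ a b, sympForm d n (g a) (g b) = sympForm d n a b) ∧ g x = y := by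
  obtain ⟨g, hg, hgw⟩ := exists_transvection d n (y - x) (sympForm d n x y)⁻¹
  refine ⟨g, hg, ?_⟩
  rw [hgw]
  have h1 : sympForm d n x (y - x) = sympForm d n x y := by
    rw [map_sub, sympForm_isAlt d n x, sub_zero]
  rw [h1, inv_mul_cancel₀ hxy, one_smul]
  abel

lemma exists_isometry (x y : V) (hx : x ≠ 0) (hy : y ≠ 0) :
    ∃ g : V ≃ₗ[ZMod d] V,
      (∀ a b, sympForm d n (g a) (g b) = sympForm d n a b) ∧ g x = y := by
  by_cases hxy : sympForm d n x y ≠ 0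
  · exact exists_isometry_step d n x y hxy
  · push_neg at hxy
    obtain ⟨z₁, hz₁⟩ := sympForm_exists_ne d n x hx
    obtain ⟨z₂, hz₂⟩ := sympForm_exists_ne d n y hy
    obtain ⟨z, hzx, hzy⟩ : ∃ z, sympForm d n x z ≠ 0 ∧ sympForm d n y z ≠ 0 := by
      by_cases h1 : sympForm d n y z₁ ≠ 0
      · exact ⟨z₁, hz₁, h1⟩
      by_cases h2 : sympForm d n x z₂ ≠ 0
      · exact ⟨z₂, h2, hz₂⟩
      push_neg at h1 h2
      refine ⟨z₁ + z₂, ?_, ?_⟩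
      · rw [map_add, h2, add_zero]; exact hz₁
      · rw [map_add, h1, zero_add]; exact hz₂
    obtain ⟨g₁, hg₁, hg₁x⟩ := exists_isometry_step d n x z hzx
    have hzy' : sympForm d n z y ≠ 0 :=
      fun h => hzy (by rw [sympForm_comm d n z y, h, neg_zero])
    obtain ⟨g₂, hg₂, hg₂z⟩ := exists_isometry_step d n z y hzy'
    refine ⟨g₁.trans g₂, fun a b => ?_, ?_⟩
    · simp [LinearEquiv.trans_apply, hg₂, hg₁]
    · simp [LinearEquiv.trans_apply, hg₁x, hg₂z]

variable (m : ℕ)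

lemma isGood_map (g : V ≃ₗ[ZMod d] V)
    (hg : ∀ a b, sympForm d n (g a) (g b) = sympForm d n a b)
    (L : Submodule (ZMod d) V) (hL : IsGoodSubspace d n m L) :
    IsGoodSubspace d n m (Submodule.map (g : V →ₗ[ZMod d] V) L) := by
  constructor
  · rintro a ⟨a', ha', rfl⟩
    rw [LinearMap.BilinForm.mem_orthogonal_iff]
    rintro b ⟨b', hb', rfl⟩
    show sympForm d n (g b') (g a') = 0
    rw [hg]
    exact (hL.1 ha') b' hb'
  · have h1 : Submodule.map (g : V →ₗ[ZMod d] V) L = Submodule.map (g : V →ₗ[ZMod d] V) L :=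
      SetLike.coe_injective rfl
    rw [h1, LinearEquiv.finrank_map_eq]
    exact hL.2

lemma mem_orth_map (g : V ≃ₗ[ZMod d] V)
    (hg : ∀ a b, sympForm d n (g a) (g b) = sympForm d n a b)
    (L : Submodule (ZMod d) V) (x : V) (hx : x ∈ (sympForm d n).orthogonal L) :
    g x ∈ (sympForm d n).orthogonal (Submodule.map (g : V →ₗ[ZMod d] V) L) := by
  rw [LinearMap.BilinForm.mem_orthogonal_iff]
  rintro b ⟨b', hb', rfl⟩
  show sympForm d n (g b') (g x) = 0
  rw [hg]
  exact hx b' hb'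

lemma map_symm_map (g : V ≃ₗ[ZMod d] V) (L : Submodule (ZMod d) V) :
    Submodule.map (g.symm : V →ₗ[ZMod d] V) (Submodule.map (g : V →ₗ[ZMod d] V) L) = L := by
  ext a
  constructor
  · rintro ⟨b, ⟨c, hc, rfl⟩, rfl⟩
    simpa using hc
  · intro ha
    exact ⟨g a, ⟨a, ha, rfl⟩, g.symm_apply_apply a⟩

lemma isometry_symm (g : V ≃ₗ[ZMod d] V)
    (hg : ∀ a b, sympForm d n (g a) (g b) = sympForm d n a b) :
    ∀ a b, sympForm d n (g.symm a) (g.symm b) = sympForm d n a b := by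
  intro a b
  have := hg (g.symm a) (g.symm b)
  simpa using this.symm

lemma card_fiber_eq (x y : V) (g : V ≃ₗ[ZMod d] V)
    (hg : ∀ a b, sympForm d n (g a) (g b) = sympForm d n a b) (hgx : g x = y) :
    Nat.card {L : Submodule (ZMod d) V //
        IsGoodSubspace d n m L ∧ x ∈ (sympForm d n).orthogonal L}
      = Nat.card {L : Submodule (ZMod d) V //
        IsGoodSubspace d n m L ∧ y ∈ (sympForm d n).orthogonal L} := by
  apply Nat.card_congr
  have hg' := isometry_symm d n g hg
  have hgy : g.symm y = x := by rw [← hgx, g.symm_apply_apply]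
  refine
    { toFun := fun L => ⟨Submodule.map (g : V →ₗ[ZMod d] V) L.1,
        isGood_map d n m g hg L.1 L.2.1, by
          have := mem_orth_map d n g hg L.1 x L.2.2
          rwa [hgx] at this⟩
      invFun := fun L => ⟨Submodule.map (g.symm : V →ₗ[ZMod d] V) L.1,
        isGood_map d n m g.symm hg' L.1 L.2.1, by
          have := mem_orth_map d n g.symm hg' L.1 y L.2.2
          rwa [hgy] at this⟩
      left_inv := fun L => Subtype.ext (map_symm_map d n g L.1)
      right_inv := fun L => Subtype.ext (by
        have := map_symm_map d n g.symm L.1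
        rwa [g.symm_symm] at this) }

lemma exists_good : ∃ L : Submodule (ZMod d) V, IsGoodSubspace d n m L := by
  classical
  let φ : (Fin (n - m) → ZMod d) →ₗ[ZMod d] V :=
    { toFun := fun c i => (if h : (i : ℕ) < n - m then c ⟨i, h⟩ else 0, 0)
      map_add' := by
        intro a b; funext i; by_cases h : (i : ℕ) < n - m <;> simp [h]
      map_smul' := by
        intro r a; funext i; by_cases h : (i : ℕ) < n - m <;> simp [h] }
  have hinj : Function.Injective φ := by
    intro a b hab
    funext j
    have h2 := congrFun hab (⟨(j : ℕ), lt_of_lt_of_le j.2 (Nat.sub_le n m)⟩ : Fin n)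
    simp only [φ, LinearMap.coe_mk, AddHom.coe_mk] at h2
    have hj : (((⟨(j : ℕ), lt_of_lt_of_le j.2 (Nat.sub_le n m)⟩ : Fin n)) : ℕ) < n - m := j.2
    rw [dif_pos hj] at h2
    simpa using congrArg Prod.fst h2
  refine ⟨LinearMap.range φ, ?_, ?_⟩
  · rintro a ⟨ca, rfl⟩
    rw [LinearMap.BilinForm.mem_orthogonal_iff]
    rintro b ⟨cb, rfl⟩
    show sympForm d n _ _ = 0
    rw [sympForm_apply]
    apply Finset.sum_eq_zero
    intro i _
    simp [φ]
  · rw [LinearMap.finrank_range_of_inj hinj, Module.finrank_fin_fun]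

lemma card_submodule (W : Submodule (ZMod d) V) :
    Nat.card W = d ^ Module.finrank (ZMod d) W := by
  haveI : NeZero d := ⟨Nat.Prime.ne_zero Fact.out⟩
  haveI : Fintype W := Fintype.ofFinite _
  rw [Nat.card_eq_fintype_card, Module.card_eq_pow_finrank (K := ZMod d), ZMod.card]

lemma card_total : Nat.card (Fin n → ZMod d × ZMod d) = d ^ (2 * n) := by
  haveI : NeZero d := ⟨Nat.Prime.ne_zero Fact.out⟩
  rw [Nat.card_eq_fintype_card, Module.card_eq_pow_finrank (K := ZMod d), ZMod.card, finrank_total]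

lemma finrank_orth_good (hm : m < n) (L : Submodule (ZMod d) V)
    (hL : IsGoodSubspace d n m L) :
    Module.finrank (ZMod d) ((sympForm d n).orthogonal L) = n + m := by
  rw [LinearMap.BilinForm.finrank_orthogonal (sympForm_nondeg d n) L,
    finrank_total, hL.2]
  omega

lemma card_orth_good (hm : m < n) (L : Submodule (ZMod d) V)
    (hL : IsGoodSubspace d n m L) :
    Nat.card ((sympForm d n).orthogonal L) = d ^ (n + m) := by
  rw [card_submodule, finrank_orth_good d n m hm L hL]

lemma main_count (hm : m < n) (x : V) (hx : x ≠ 0) :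
    Nat.card {L : Submodule (ZMod d) V // IsGoodSubspace d n m L} * (d ^ (n + m) - 1)
      = (d ^ (2 * n) - 1) *
        Nat.card {L : Submodule (ZMod d) V //
          IsGoodSubspace d n m L ∧ x ∈ (sympForm d n).orthogonal L} := by
  classical
  haveI : NeZero d := ⟨Nat.Prime.ne_zero Fact.out⟩
  haveI : Finite (Submodule (ZMod d) V) :=
    Finite.of_injective (fun L => (L : Set V)) SetLike.coe_injective
  haveI : Fintype (Submodule (ZMod d) V) := Fintype.ofFinite _
  set S := Submodule (ZMod d) V
  set P := {p : V × S // p.1 ≠ 0 ∧ IsGoodSubspace d n m p.2 ∧ p.1 ∈ (sympForm d n).orthogonal p.2} with hP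
  -- count fiberwise over L
  have e1 : P ≃ Σ L : S, {v : V // v ≠ 0 ∧ IsGoodSubspace d n m L ∧ v ∈ (sympForm d n).orthogonal L} := by
    refine Equiv.trans ?_ (Equiv.subtypeProdEquivSigmaSubtype
      (fun (L : S) (v : V) => v ≠ 0 ∧ IsGoodSubspace d n m L ∧ v ∈ (sympForm d n).orthogonal L))
    exact (Equiv.prodComm V S).subtypeEquiv (fun p => Iff.rfl)
  have e2 : P ≃ Σ v : V, {L : S // v ≠ 0 ∧ IsGoodSubspace d n m L ∧ v ∈ (sympForm d n).orthogonal L} :=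
    Equiv.subtypeProdEquivSigmaSubtype
      (fun (v : V) (L : S) => v ≠ 0 ∧ IsGoodSubspace d n m L ∧ v ∈ (sympForm d n).orthogonal L)
  have count1 : Fintype.card P
      = Fintype.card {L : S // IsGoodSubspace d n m L} * (d ^ (n + m) - 1) := by
    rw [Fintype.card_congr e1, Fintype.card_sigma]
    have hfib : ∀ L : S,
        Fintype.card {v : V // v ≠ 0 ∧ IsGoodSubspace d n m L ∧ v ∈ (sympForm d n).orthogonal L}
          = if IsGoodSubspace d n m L then d ^ (n + m) - 1 else 0 := by
      intro L
      by_cases hL : IsGoodSubspace d n m L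
      · rw [if_pos hL]
        have e3 : {v : V // v ≠ 0 ∧ IsGoodSubspace d n m L ∧ v ∈ (sympForm d n).orthogonal L}
            ≃ {w : ((sympForm d n).orthogonal L) // ¬ (w = 0)} :=
          { toFun := fun v => ⟨⟨v.1, v.2.2.2⟩, fun h => v.2.1 (by
              simpa using congrArg Subtype.val h)⟩
            invFun := fun w => ⟨(w.1 : V), fun h => w.2 (Subtype.ext h), hL, w.1.2⟩
            left_inv := fun v => rfl
            right_inv := fun w => rfl }
        rw [Fintype.card_congr e3, Fintype.card_subtype_compl]
        have : Fintype.card {w : ((sympForm d n).orthogonal L) // w = 0} = 1 :=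
          Fintype.card_subtype_eq (0 : ((sympForm d n).orthogonal L))
        rw [this, ← Nat.card_eq_fintype_card, card_orth_good d n m hm L hL]
      · rw [if_neg hL]
        refine Fintype.card_eq_zero_iff.mpr ⟨fun v => hL v.2.2.1⟩
    rw [Finset.sum_congr rfl (fun L _ => hfib L), ← Finset.sum_filter,
      Finset.sum_const, smul_eq_mul, ← Fintype.card_subtype]
  have count2 : Fintype.card P
      = (d ^ (2 * n) - 1) * Fintype.card {L : S // IsGoodSubspace d n m L ∧ x ∈ (sympForm d n).orthogonal L} := by
    rw [Fintype.card_congr e2, Fintype.card_sigma]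
    have hfib : ∀ v : V,
        Fintype.card {L : S // v ≠ 0 ∧ IsGoodSubspace d n m L ∧ v ∈ (sympForm d n).orthogonal L}
          = if v ≠ 0 then
              Fintype.card {L : S // IsGoodSubspace d n m L ∧ x ∈ (sympForm d n).orthogonal L} else 0 := by
      intro v
      by_cases hv : v ≠ 0
      · rw [if_pos hv]
        obtain ⟨g, hg, hgx⟩ := exists_isometry d n x v hx hv
        have hcard := card_fiber_eq d n m x v g hg hgx
        rw [Nat.card_eq_fintype_card, Nat.card_eq_fintype_card] at hcard
        rw [Fintype.card_congr (Equiv.subtypeEquivRight (fun L => and_iff_right hv)), ← hcard]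
      · rw [if_neg hv]
        push_neg at hv
        refine Fintype.card_eq_zero_iff.mpr ⟨fun L => L.2.1 hv⟩
    rw [Finset.sum_congr rfl (fun v _ => hfib v), ← Finset.sum_filter,
      Finset.sum_const, smul_eq_mul]
    congr 1
    rw [← Fintype.card_subtype]
    have e4 : {v : V // v ≠ 0} ≃ {v : V // ¬ (v = 0)} := Equiv.refl _
    rw [Fintype.card_congr e4, Fintype.card_subtype_compl, Fintype.card_subtype_eq (0 : V)]
    congr 1
    rw [← Nat.card_eq_fintype_card, card_total]
  rw [Nat.card_eq_fintype_card, Nat.card_eq_fintype_card, ← count1, count2]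

end Aux

/-- Counting self-orthogonal subspaces through a vector: with `A` the collection of
self-orthogonal `(n-m)`-dimensional subspaces of `F^{2n}` and
`A(x) = {L ∈ A : x ∈ L^⊥}`, the collection `A` is nonempty and for every nonzero `x`,
`|A(x)| / |A| = (d^{n+m} - 1) / (d^{2n} - 1)`. -/
theorem card_good_through_vector (d n m : ℕ) [Fact (Nat.Prime d)] (hm : m < n)
    (x : Fin n → ZMod d × ZMod d) (hx : x ≠ 0) :
    Nat.card {L : Submodule (ZMod d) (Fin n → ZMod d × ZMod d) // IsGoodSubspace d n m L}
        ≠ 0 ∧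
    (Nat.card {L : Submodule (ZMod d) (Fin n → ZMod d × ZMod d) //
          IsGoodSubspace d n m L ∧ x ∈ (sympForm d n).orthogonal L} : ℚ) /
        (Nat.card {L : Submodule (ZMod d) (Fin n → ZMod d × ZMod d) //
          IsGoodSubspace d n m L} : ℚ)
      = ((d : ℚ) ^ (n + m) - 1) / ((d : ℚ) ^ (2 * n) - 1) := by
  have hA : Nat.card {L : Submodule (ZMod d) (Fin n → ZMod d × ZMod d) //
      IsGoodSubspace d n m L} ≠ 0 := by
    rw [Nat.card_ne_zero]
    obtain ⟨L, hL⟩ := exists_good d n m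
    exact ⟨⟨⟨L, hL⟩⟩, inferInstance⟩
  refine ⟨hA, ?_⟩
  have key := main_count d n m hm x hx
  set a := Nat.card {L : Submodule (ZMod d) (Fin n → ZMod d × ZMod d) //
    IsGoodSubspace d n m L} with ha_def
  set c := Nat.card {L : Submodule (ZMod d) (Fin n → ZMod d × ZMod d) //
    IsGoodSubspace d n m L ∧ x ∈ (sympForm d n).orthogonal L} with hc_def
  have hd : 1 < d := (Fact.out : d.Prime).one_lt
  have h1 : 1 ≤ d ^ (n + m) := Nat.one_le_pow _ _ (by omega)
  have h2 : 1 ≤ d ^ (2 * n) := Nat.one_le_pow _ _ (by omega)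
  have keyQ : (a : ℚ) * ((d : ℚ) ^ (n + m) - 1) = ((d : ℚ) ^ (2 * n) - 1) * (c : ℚ) := by
    have hcast := congrArg (Nat.cast : ℕ → ℚ) key
    push_cast [Nat.cast_sub h1, Nat.cast_sub h2] at hcast
    exact hcast
  have haQ : (a : ℚ) ≠ 0 := Nat.cast_ne_zero.mpr hA
  have hdQ : (1 : ℚ) < (d : ℚ) ^ (2 * n) := by
    apply one_lt_pow₀ (by exact_mod_cast hd) (by omega)
  have hD : ((d : ℚ) ^ (2 * n) - 1) ≠ 0 := sub_ne_zero.mpr (ne_of_gt hdQ)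
  rw [div_eq_div_iff haQ hD]
  linear_combination -keyQ
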